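/- arXiv:0905.2287 — 4 statements merged into one kernel-verified Lean document; each statement's English description precedes it below -/
import Mathlib

section
/- Let G be a finite connected weighted graph and T a spanning tree of G that is not a minimum spanning tree. Then there exists a non-tree edge e and a tree edge f in the fundamental cycle C_e with w(f) > w(e) (i.e., an improvement exists). -/
/-- `T` is a spanning tree of `G`. -/
def IsSpanningTree {V : Type*} (G T : SimpleGraph V) : Prop :=
  T ≤ G ∧ T.IsTree

/-- `f` lies on the fundamental cycle of the (non-tree) edge `{u,v}` w.r.t. the
tree `T`, i.e. on the unique `T`-path from `u` to `v`. -/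
def InFundCycle {V : Type*} (T : SimpleGraph V) (u v : V) (f : Sym2 V) : Prop :=
  ∃ p : T.Walk u v, p.IsPath ∧ f ∈ p.edges

/-- Total weight of the edges of `T`. -/
noncomputable def treeWeight {V : Type*} (w : Sym2 V → ℝ) (T : SimpleGraph V) : ℝ :=
  ∑ᶠ e ∈ T.edgeSet, w e

/-- One improvement step: exchange a tree edge `f` of the fundamental cycle of a
strictly lighter non-tree edge `{u,v}` for that edge. -/
def ImproveStep {V : Type*} (G : SimpleGraph V) (w : Sym2 V → ℝ)
    (T T' : SimpleGraph V) : Prop :=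
  ∃ u v f, G.Adj u v ∧ s(u, v) ∉ T.edgeSet ∧ f ∈ T.edgeSet ∧ InFundCycle T u v f ∧
    w s(u, v) < w f ∧
    T' = SimpleGraph.fromEdgeSet ((T.edgeSet \ {f}) ∪ {s(u, v)})

open SimpleGraph

section Aux

variable {V : Type*}

/-- Sum over `S ∪ {f}` with `f ∉ S`. -/
private lemma WS_union_singleton [Finite (Sym2 V)] (w : Sym2 V → ℝ) {S : Set (Sym2 V)}
    {f : Sym2 V} (hf : f ∉ S) :
    ∑ᶠ e ∈ S ∪ {f}, w e = (∑ᶠ e ∈ S, w e) + w f := by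
  rw [finsum_mem_union (by simpa using hf) (Set.toFinite S) (Set.toFinite {f}),
    finsum_mem_singleton]

/-- Sum over `S` decomposed as `S \ {e}` plus `w e`, for `e ∈ S`. -/
private lemma WS_diff_singleton [Finite (Sym2 V)] (w : Sym2 V → ℝ) {S : Set (Sym2 V)}
    {e : Sym2 V} (he : e ∈ S) :
    ∑ᶠ x ∈ S, w x = (∑ᶠ x ∈ S \ {e}, w x) + w e := by
  have h1 : S = (S \ {e}) ∪ {e} := by
    rw [Set.diff_union_self, Set.union_eq_self_of_subset_right (by simpa using he)]
  conv_lhs => rw [h1]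
  exact WS_union_singleton w (by simp)

/-- Every vertex on an `H`-walk ending at a vertex which, after deleting edge `s(u,v)`,
reaches `u` or `v`, also reaches `u` or `v` after the deletion. -/
private lemma walk_reach_or {H : SimpleGraph V} (u v : V) :
    ∀ {a b : V}, H.Walk a b →
      ((H.deleteEdges {s(u, v)}).Reachable b u ∨ (H.deleteEdges {s(u, v)}).Reachable b v) →
      ((H.deleteEdges {s(u, v)}).Reachable a u ∨ (H.deleteEdges {s(u, v)}).Reachable a v) := by
  intro a b p
  induction p with
  | nil => exact id
  | @cons x y z h q ih =>
    intro hb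
    by_cases he : s(x, y) = s(u, v)
    · rw [Sym2.eq_iff] at he
      rcases he with ⟨rfl, rfl⟩ | ⟨rfl, rfl⟩
      · exact Or.inl (Reachable.refl _)
      · exact Or.inr (Reachable.refl _)
    · have hK : (H.deleteEdges {s(u, v)}).Adj x y :=
        deleteEdges_adj.mpr ⟨h, by simpa using he⟩
      rcases ih hb with h1 | h1
      · exact Or.inl (hK.reachable.trans h1)
      · exact Or.inr (hK.reachable.trans h1)

/-- On a walk from a vertex satisfying `P` to one not satisfying `P`, some edge
crosses from `P` to `¬P`. -/
private lemma exists_cross {T : SimpleGraph V} (P : V → Prop) :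
    ∀ {a b : V} (p : T.Walk a b), P a → ¬P b →
      ∃ x y, T.Adj x y ∧ P x ∧ ¬P y ∧ s(x, y) ∈ p.edges := by
  intro a b p
  induction p with
  | nil => intro ha hb; exact absurd ha hb
  | @cons x y z h q ih =>
    intro ha hb
    by_cases hc : P y
    · obtain ⟨x', y', hadj, hx, hy, hm⟩ := ih hc hb
      exact ⟨x', y', hadj, hx, hy, by simp [hm]⟩
    · exact ⟨x, y, h, ha, hc, by simp⟩

private lemma main_ind {V : Type*} [Fintype V] (G T : SimpleGraph V) (w : Sym2 V → ℝ)
    (hw : ∀ x, 0 < w x) (hTle : T ≤ G) (hTtree : T.IsTree)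
    (Hneg : ∀ u v f, G.Adj u v → s(u, v) ∉ T.edgeSet → f ∈ T.edgeSet →
      InFundCycle T u v f → w f ≤ w s(u, v)) :
    ∀ n (H : SimpleGraph V), H ≤ G → H.Connected →
      (H.edgeSet \ T.edgeSet).ncard = n → treeWeight w T ≤ treeWeight w H := by
  intro n
  induction n with
  | zero =>
    intro H hle hconn hcard
    have hsub : H.edgeSet ⊆ T.edgeSet :=
      Set.diff_eq_empty.mp ((Set.ncard_eq_zero (Set.toFinite _)).mp hcard)
    have hHT : H ≤ T := edgeSet_subset_edgeSet.mp hsub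
    have hTH : T ≤ H := by
      rw [← edgeSet_subset_edgeSet]
      intro f hf
      by_contra hfH
      induction f using Sym2.ind with
      | _ x y =>
        have hbr : T.IsBridge s(x, y) :=
          isAcyclic_iff_forall_adj_isBridge.mp hTtree.2 hf
        have hnr : ¬(T.deleteEdges {s(x, y)}).Reachable x y := isBridge_iff.mp hbr
        have hle' : H ≤ T.deleteEdges {s(x, y)} := by
          rw [← edgeSet_subset_edgeSet, edgeSet_deleteEdges]
          exact fun a ha => ⟨hsub ha, fun h' => hfH (by rwa [Set.mem_singleton_iff.mp h'] at ha)⟩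
        exact hnr ((hconn.preconnected x y).mono hle')
    rw [le_antisymm hHT hTH]
  | succ n ih =>
    intro H hle hconn hcard
    obtain ⟨e, he⟩ := Set.nonempty_of_ncard_ne_zero (by rw [hcard]; exact n.succ_ne_zero)
    induction e using Sym2.ind with
    | _ u v =>
      have hHuv : H.Adj u v := he.1
      have heT : s(u, v) ∉ T.edgeSet := he.2
      set K := H.deleteEdges {s(u, v)} with hK
      have hKedge : K.edgeSet = H.edgeSet \ {s(u, v)} := edgeSet_deleteEdges _
      have hreach_or : ∀ a : V, K.Reachable a u ∨ K.Reachable a v := fun a => by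
        obtain ⟨p⟩ := hconn.preconnected a u
        exact walk_reach_or u v p (Or.inl (Reachable.refl _))
      have hdiffcard : ((H.edgeSet \ {s(u, v)}) \ T.edgeSet).ncard = n := by
        rw [Set.diff_diff_comm, Set.ncard_diff_singleton_of_mem he, hcard]
        omega
      have hWH : treeWeight w H = (∑ᶠ x ∈ H.edgeSet \ {s(u, v)}, w x) + w s(u, v) :=
        WS_diff_singleton w he.1
      by_cases hbridge : K.Reachable u v
      · -- not a bridge : just delete the edge
        have hKconn : K.Connected := by
          haveI := hconn.nonempty
          refine Connected.mk fun a b => ?_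
          have ha : K.Reachable a u := (hreach_or a).elim id fun h => h.trans hbridge.symm
          have hb : K.Reachable b u := (hreach_or b).elim id fun h => h.trans hbridge.symm
          exact ha.trans hb.symm
        have hKle : K ≤ G := le_trans (by
          rw [← edgeSet_subset_edgeSet, hKedge]; exact Set.diff_subset) hle
        have := ih K hKle hKconn (by rw [hKedge]; exact hdiffcard)
        have hKW : treeWeight w K = ∑ᶠ x ∈ H.edgeSet \ {s(u, v)}, w x := by
          unfold treeWeight; rw [hKedge]
        nlinarith [hw s(u, v)]
      · -- bridge case : exchange with a crossing edge of the T-path from u to v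
        obtain ⟨p, hp, -⟩ := hTtree.existsUnique_path u v
        obtain ⟨x, y, hxy, hx, hy, hmem⟩ :=
          exists_cross (fun z => K.Reachable u z) p (Reachable.refl _) hbridge
        have hfT : s(x, y) ∈ T.edgeSet := p.edges_subset_edgeSet hmem
        have hfe : s(x, y) ≠ s(u, v) := fun h => heT (h ▸ hfT)
        have hfH : s(x, y) ∉ H.edgeSet := fun h => by
          have : K.Adj x y := deleteEdges_adj.mpr ⟨h, by simpa using hfe⟩
          exact hy (hx.trans this.reachable)
        have hwf : w s(x, y) ≤ w s(u, v) :=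
          Hneg u v s(x, y) (hle hHuv) heT hfT ⟨p, hp, hmem⟩
        set S : Set (Sym2 V) := (H.edgeSet \ {s(u, v)}) ∪ {s(x, y)} with hS
        set H' : SimpleGraph V := fromEdgeSet S with hH'
        have hH'edge : H'.edgeSet = S := by
          rw [hH', edgeSet_fromEdgeSet]
          refine Set.eq_of_subset_of_subset Set.diff_subset fun a haS => ⟨haS, ?_⟩
          rcases haS with ⟨haH, -⟩ | ha
          · exact H.not_isDiag_of_mem_edgeSet haH
          · exact T.not_isDiag_of_mem_edgeSet (Set.mem_singleton_iff.mp ha ▸ hfT)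
        have hKH' : K ≤ H' := by
          rw [← edgeSet_subset_edgeSet, hKedge, hH'edge]; exact Set.subset_union_left
        have hH'xy : H'.Adj x y := by
          rw [← mem_edgeSet, hH'edge]; exact Or.inr rfl
        have hyv : K.Reachable y v := by
          rcases hreach_or y with h1 | h1
          · exact absurd h1.symm hy
          · exact h1
        have huv' : H'.Reachable u v :=
          ((hx.mono hKH').trans hH'xy.reachable).trans (hyv.mono hKH')
        have hH'conn : H'.Connected := by
          haveI := hconn.nonempty
          refine Connected.mk fun a b => ?_
          have key : ∀ c : V, H'.Reachable c u := fun c => by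
            rcases hreach_or c with h1 | h1
            · exact h1.mono hKH'
            · exact (h1.mono hKH').trans huv'.symm
          exact (key a).trans (key b).symm
        have hH'le : H' ≤ G := by
          rw [← edgeSet_subset_edgeSet, hH'edge]
          rintro a (⟨haH, -⟩ | ha)
          · exact edgeSet_mono hle haH
          · exact edgeSet_mono hTle (Set.mem_singleton_iff.mp ha ▸ hfT)
        have hH'card : (H'.edgeSet \ T.edgeSet).ncard = n := by
          rw [hH'edge, hS, Set.union_diff_distrib,
            Set.diff_eq_empty.mpr (Set.singleton_subset_iff.mpr hfT), Set.union_empty]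
          exact hdiffcard
        have hH'W : treeWeight w H' = (∑ᶠ x ∈ H.edgeSet \ {s(u, v)}, w x) + w s(x, y) := by
          unfold treeWeight
          rw [hH'edge, hS]
          exact WS_union_singleton w (fun h => hfH h.1)
        have := ih H' hH'le hH'conn hH'card
        linarith

end Aux

/-- Red rule, converse direction: a spanning tree which is not minimum admits an
improvement, i.e. a non-tree edge `e = {u,v}` and a tree edge `f` on its
fundamental cycle with `w f > w e`. -/
theorem not_mst_imp_improvement {V : Type*} [Fintype V] (G T : SimpleGraph V)
    (w : Sym2 V → ℝ) (hw : ∀ x, 0 < w x) (hG : G.Connected)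
    (hT : IsSpanningTree G T)
    (hnotmst : ∃ T', IsSpanningTree G T' ∧ treeWeight w T' < treeWeight w T) :
    ∃ u v f, G.Adj u v ∧ s(u, v) ∉ T.edgeSet ∧ f ∈ T.edgeSet ∧
      InFundCycle T u v f ∧ w s(u, v) < w f := by
  by_contra hcon
  push_neg at hcon
  obtain ⟨T', hT', hlt⟩ := hnotmst
  have := main_ind G T w hw hT.1 hT.2
    hcon
    (T'.edgeSet \ T.edgeSet).ncard T' hT'.1 hT'.2.isConnected rfl
  linarith
end

section
/- Let G be a finite connected weighted graph. Starting from any spanning tree T₀ and repeatedly applying improvements (replacing a tree edge f by a non-tree edge e with f in C_e and w(f) > w(e)), any sequence of improvements terminates, and the final tree is a minimum spanning tree of G. -/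
open SimpleGraph

-- helper lemma 1: weight sum
lemma wsum {V : Type*} [Fintype V] (w : Sym2 V → ℝ) (s : Set (Sym2 V)) {e f : Sym2 V}
    (he : e ∈ s) (hf : f ∉ s) :
    ∑ᶠ x ∈ (s \ {e}) ∪ {f}, w x = (∑ᶠ x ∈ s, w x) - w e + w f := by
  have hd1 : Disjoint (s \ {e}) ({f} : Set (Sym2 V)) := by
    rw [Set.disjoint_singleton_right]; exact fun h => hf h.1
  have hd2 : Disjoint (s \ {e}) ({e} : Set (Sym2 V)) := by
    rw [Set.disjoint_singleton_right]; exact fun h => h.2 rfl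
  have h1 := finsum_mem_union hd1 (Set.toFinite _) (Set.toFinite _) (f := w)
  have h2 := finsum_mem_union hd2 (Set.toFinite _) (Set.toFinite _) (f := w)
  rw [Set.diff_union_self, Set.union_eq_self_of_subset_right (Set.singleton_subset_iff.2 he)] at h2
  rw [h1, h2, finsum_mem_singleton, finsum_mem_singleton]
  ring

-- helper lemma 2: crossing edge on a walk
lemma crossWalk {V : Type*} {T : SimpleGraph V} {x y : V} (p : T.Walk x y)
    (S : Set V) (hx : x ∈ S) (hy : y ∉ S) :
    ∃ a b, s(a, b) ∈ p.edges ∧ a ∈ S ∧ b ∉ S := by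
  induction p with
  | nil => exact absurd hx hy
  | cons h q ih =>
      rename_i a c _
      by_cases hc : c ∈ S
      · obtain ⟨a', b', hm, h1, h2⟩ := ih hc hy
        exact ⟨a', b', List.mem_cons_of_mem _ hm, h1, h2⟩
      · exact ⟨a, c, List.mem_cons_self, hx, hc⟩

-- helper: deleting one edge leaves at most two reachability classes
lemma twoClasses {V : Type*} {T' : SimpleGraph V} {u v : V}
    (hconn : T'.Connected) (z : V) :
    (T' \ fromEdgeSet {s(u, v)}).Reachable u z ∨ (T' \ fromEdgeSet {s(u, v)}).Reachable v z := by
  set D := T' \ fromEdgeSet {s(u, v)} with hD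
  obtain ⟨q⟩ := hconn u z
  suffices H : ∀ {x z : V} (_ : T'.Walk x z), (D.Reachable u x ∨ D.Reachable v x) →
      (D.Reachable u z ∨ D.Reachable v z) from H q (Or.inl (Reachable.refl u))
  intro x z q
  induction q with
  | nil => exact id
  | cons h q ih =>
      rename_i a c _
      intro hx
      apply ih
      by_cases hec : s(a, c) = s(u, v)
      · rw [Sym2.eq_iff] at hec
        rcases hec with ⟨rfl, rfl⟩ | ⟨rfl, rfl⟩
        · exact Or.inr (Reachable.refl _)
        · exact Or.inl (Reachable.refl _)
      · have hadj : D.Adj a c := by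
          rw [hD, sdiff_adj]
          refine ⟨h, fun hcon => ?_⟩
          rw [fromEdgeSet_adj] at hcon
          exact hec hcon.1
        rcases hx with h1 | h1
        · exact Or.inl (h1.trans hadj.reachable)
        · exact Or.inr (h1.trans hadj.reachable)


lemma swap_lemma {V : Type*} [Fintype V] (G : SimpleGraph V) (w : Sym2 V → ℝ)
    {T : SimpleGraph V} (hT : IsSpanningTree G T)
    (hopt : ∀ T', ¬ ImproveStep G w T T')
    {T' : SimpleGraph V} (hT' : IsSpanningTree G T')
    {u v : V} (he : s(u, v) ∈ T'.edgeSet) (heT : s(u, v) ∉ T.edgeSet) :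
    ∃ T'', IsSpanningTree G T'' ∧ treeWeight w T'' ≤ treeWeight w T' ∧
      T''.edgeSet \ T.edgeSet = (T'.edgeSet \ T.edgeSet) \ {s(u, v)} := by
  classical
  set D : SimpleGraph V := T' \ fromEdgeSet {s(u, v)} with hDdef
  set S : Set V := {z | D.Reachable u z} with hSdef
  have huS : u ∈ S := Reachable.refl u
  have hvS : v ∉ S := by
    intro hv
    have h2 : T'.Adj u v ∧ D.Reachable u v := ⟨he, hv⟩
    rw [hDdef, ← deleteEdges.eq_1, adj_and_reachable_delete_edges_iff_exists_cycle] at h2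
    obtain ⟨x, c, hc, -⟩ := h2
    exact hT'.2.IsAcyclic c hc
  obtain ⟨q⟩ := hT.2.isConnected u v
  set p : T.Walk u v := (q.toPath : T.Path u v).1 with hpdef
  have hp : p.IsPath := q.toPath.2
  obtain ⟨a, b, hfp, haS, hbS⟩ := crossWalk p S huS hvS
  have hfT : s(a, b) ∈ T.edgeSet := p.edges_subset_edgeSet hfp
  have hfe : s(a, b) ≠ s(u, v) := fun h => heT (h ▸ hfT)
  have hfT' : s(a, b) ∉ T'.edgeSet := by
    intro hmem
    have hadj : D.Adj a b := by
      rw [hDdef, sdiff_adj]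
      exact ⟨(mem_edgeSet _).mp hmem, fun hcon => hfe ((fromEdgeSet_adj _).1 hcon).1⟩
    exact hbS (haS.trans hadj.reachable)
  have hwfe : w s(a, b) ≤ w s(u, v) := by
    by_contra hlt
    push_neg at hlt
    exact hopt _ ⟨u, v, s(a, b), (mem_edgeSet _).mp (edgeSet_subset_edgeSet.2 hT'.1 he),
      heT, hfT, ⟨p, hp, hfp⟩, hlt, rfl⟩
  set E'' : Set (Sym2 V) := (T'.edgeSet \ {s(u, v)}) ∪ {s(a, b)} with hE''def
  set T'' : SimpleGraph V := fromEdgeSet E'' with hT''def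
  have hE''nd : ∀ x ∈ E'', ¬ x.IsDiag := by
    rintro x (⟨hx, -⟩ | hx)
    · exact T'.not_isDiag_of_mem_edgeSet hx
    · rw [Set.mem_singleton_iff] at hx; subst hx; exact T.not_isDiag_of_mem_edgeSet hfT
  have hES : T''.edgeSet = E'' := by
    rw [hT''def, edgeSet_fromEdgeSet]
    ext x
    simp only [Set.mem_diff, Set.mem_setOf_eq]
    exact ⟨fun h => h.1, fun h => ⟨h, hE''nd x h⟩⟩
  have hDle : D ≤ T'' := by
    intro x y hxy
    rw [hDdef, sdiff_adj] at hxy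
    obtain ⟨h1, h2⟩ := hxy
    rw [← mem_edgeSet _, hES]
    exact Or.inl ⟨(mem_edgeSet _).mpr h1, fun hc => h2 ((fromEdgeSet_adj _).2 ⟨hc, h1.ne⟩)⟩
  have hT''f : T''.Adj a b := by
    rw [← mem_edgeSet _, hES]; exact Or.inr rfl
  have hreach : ∀ z, T''.Reachable u z := by
    intro z
    have huv'' : T''.Reachable u v := by
      have h1 : T''.Reachable u a := (haS : D.Reachable u a).mono hDle
      have h3 : D.Reachable v b := ((twoClasses hT'.2.isConnected b).resolve_left hbS)
      exact (h1.trans hT''f.reachable).trans ((h3.mono hDle).symm)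
    rcases twoClasses (u := u) (v := v) hT'.2.isConnected z with h | h
    · exact h.mono hDle
    · exact huv''.trans (h.mono hDle)
  have hconn'' : T''.Connected := by
    rw [connected_iff]
    exact ⟨fun x y => (hreach x).symm.trans (hreach y), hT'.2.isConnected.nonempty⟩
  have hacyc : T''.IsAcyclic := by
    intro x c hc
    by_cases hfc : s(a, b) ∈ c.edges
    · have hbr : T''.IsBridge s(a, b) := by
        rw [isBridge_iff]
        refine fun hr => ?_
        have hle : T'' \ fromEdgeSet {s(a, b)} ≤ D := by
          intro x' y' hxy
          rw [sdiff_adj] at hxy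
          obtain ⟨h1, h2⟩ := hxy
          have h1' : s(x', y') ∈ E'' := hES ▸ (mem_edgeSet _).mpr h1
          have hne : s(x', y') ≠ s(a, b) := by
            intro hcon
            exact h2 ((fromEdgeSet_adj _).2 ⟨by rw [hcon]; rfl, h1.ne⟩)
          rcases h1' with ⟨hm, hm'⟩ | hm
          · rw [hDdef, sdiff_adj]
            exact ⟨(mem_edgeSet _).mp hm, fun hcon => hm' ((fromEdgeSet_adj _).1 hcon).1⟩
          · exact absurd hm hne
        exact hbS (haS.trans (hr.mono hle))
      rw [isBridge_iff_adj_and_forall_cycle_notMem ((mem_edgeSet _).mpr hT''f)] at hbr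
      exact hbr c hc hfc
    · have hsub : ∀ x ∈ c.edges, x ∈ T'.edgeSet := by
        intro x hx
        have hx2 := c.edges_subset_edgeSet hx
        rw [hES] at hx2
        rcases hx2 with ⟨h1, -⟩ | h1
        · exact h1
        · rw [Set.mem_singleton_iff] at h1; exact absurd (h1 ▸ hx) hfc
      exact hT'.2.IsAcyclic (c.transfer T' hsub) (hc.transfer hsub)
  refine ⟨T'', ⟨?_, ⟨hconn'', hacyc⟩⟩, ?_, ?_⟩
  · rw [← edgeSet_subset_edgeSet, hES]
    rintro x (⟨hx, -⟩ | hx)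
    · exact edgeSet_subset_edgeSet.2 hT'.1 hx
    · rw [Set.mem_singleton_iff] at hx; subst hx
      exact edgeSet_subset_edgeSet.2 hT.1 hfT
  · rw [treeWeight, treeWeight, hES, hE''def, wsum w T'.edgeSet he hfT']
    linarith
  · rw [hES, hE''def]
    ext x
    simp only [Set.mem_diff, Set.mem_union, Set.mem_singleton_iff]
    constructor
    · rintro ⟨h1 | h1, h2⟩
      · exact ⟨⟨h1.1, h2⟩, h1.2⟩
      · subst h1; exact absurd hfT h2
    · rintro ⟨⟨h1, h2⟩, h3⟩
      exact ⟨Or.inl ⟨h1, h3⟩, h2⟩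

lemma step_decreases {V : Type*} [Fintype V] (G : SimpleGraph V) (w : Sym2 V → ℝ)
    {T T' : SimpleGraph V} (h : ImproveStep G w T T') :
    treeWeight w T' < treeWeight w T := by
  obtain ⟨u, v, f, hGuv, he, hf, -, hwlt, rfl⟩ := h
  have hES : (fromEdgeSet ((T.edgeSet \ {f}) ∪ {s(u, v)})).edgeSet
      = (T.edgeSet \ {f}) ∪ {s(u, v)} := by
    rw [edgeSet_fromEdgeSet]
    ext x
    simp only [Set.mem_diff, Set.mem_setOf_eq]
    refine ⟨fun h => h.1, fun h => ⟨h, ?_⟩⟩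
    rcases h with ⟨h1, -⟩ | h1
    · exact T.not_isDiag_of_mem_edgeSet h1
    · rw [Set.mem_singleton_iff] at h1; subst h1
      simp [Sym2.mk_isDiag_iff, hGuv.ne]
  rw [treeWeight, treeWeight, hES, wsum w T.edgeSet hf he]
  linarith

lemma min_aux {V : Type*} [Fintype V] (G : SimpleGraph V) (w : Sym2 V → ℝ)
    {T : SimpleGraph V} (hT : IsSpanningTree G T)
    (hopt : ∀ T', ¬ ImproveStep G w T T') :
    ∀ n (T' : SimpleGraph V), IsSpanningTree G T' → (T'.edgeSet \ T.edgeSet).ncard = n →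
      treeWeight w T ≤ treeWeight w T' := by
  intro n
  induction n with
  | zero =>
    intro T' hT' hcard
    classical
    have hsub : T'.edgeSet ⊆ T.edgeSet := by
      rw [← Set.diff_eq_empty]
      exact (Set.ncard_eq_zero (Set.toFinite _)).mp hcard
    have h1 := hT.2.card_edgeFinset
    have h2 := hT'.2.card_edgeFinset
    have hfs : T'.edgeFinset ⊆ T.edgeFinset := by
      intro x hx
      rw [mem_edgeFinset] at hx ⊢
      exact hsub hx
    have hfeq : T'.edgeFinset = T.edgeFinset := Finset.eq_of_subset_of_card_le hfs (by omega)
    have hEq : T' = T := by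
      rw [← edgeSet_inj, ← coe_edgeFinset, ← coe_edgeFinset, hfeq]
    rw [hEq]
  | succ n ih =>
    intro T' hT' hcard
    have hne : (T'.edgeSet \ T.edgeSet).Nonempty := by
      rw [Set.nonempty_iff_ne_empty]
      intro h
      rw [h, Set.ncard_empty] at hcard
      omega
    obtain ⟨e, he⟩ := hne
    revert he
    induction e using Sym2.ind with
    | _ u v =>
    intro he
    obtain ⟨heT', heTT⟩ := he
    obtain ⟨T'', hst'', hw'', hdiff''⟩ := swap_lemma G w hT hopt hT' heT' heTT
    have hmem : s(u, v) ∈ T'.edgeSet \ T.edgeSet := ⟨heT', heTT⟩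
    have hcard'' : (T''.edgeSet \ T.edgeSet).ncard = n := by
      rw [hdiff'', Set.ncard_diff_singleton_of_mem hmem, hcard]
      omega
    exact le_trans (ih T'' hst'' hcard'') hw''


/-- Any sequence of improvements terminates (no infinite chain of improvement
steps from a spanning tree), and a spanning tree admitting no improvement is a
minimum spanning tree. -/
theorem improvements_terminate_and_yield_mst {V : Type*} [Fintype V]
    (G : SimpleGraph V) (w : Sym2 V → ℝ) (hw : ∀ x, 0 < w x) (hG : G.Connected) :
    (∀ seq : ℕ → SimpleGraph V, IsSpanningTree G (seq 0) →
      (∀ n, ImproveStep G w (seq n) (seq (n + 1))) → False) ∧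
    (∀ T, IsSpanningTree G T → (∀ T', ¬ ImproveStep G w T T') →
      ∀ T', IsSpanningTree G T' → treeWeight w T ≤ treeWeight w T') := by
  constructor
  · intro seq h0 hstep
    have hanti : StrictAnti fun n => treeWeight w (seq n) :=
      strictAnti_nat_of_succ_lt fun n => step_decreases G w (hstep n)
    have hinj : Function.Injective seq := fun m n hmn => hanti.injective (congrArg _ hmn)
    haveI : Finite (SimpleGraph V) := by infer_instance
    haveI := Finite.of_injective seq hinj
    exact not_finite ℕ
  · intro T hT hopt T' hT'
    exact min_aux G w hT hopt _ T' hT' rfl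
end

section
/- Let G be a finite connected graph with n vertices and m edges. Any sequence of improvements in which each step strictly decreases the multiset of tree-edge weights can replace each of the m - n + 1 non-tree edges at most once per 'pass', and there exists a family of weighted graphs in which Θ(m - n + 1) successive improvements are required before reaching a minimum spanning tree. -/
/-! ### Auxiliary construction: a bouquet of `k` triangles -/

namespace LBF
open SimpleGraph
variable (k : ℕ)

abbrev Vk := Option (Fin k × Bool)

variable {k}
def rt : Vk k := none
def A (j : Fin k) : Vk k := some (j, false)
def B (j : Fin k) : Vk k := some (j, true)
variable (k)

noncomputable def ga : Vk k → ℝ := fun v => match v with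
  | none => 2
  | some (_, false) => 0
  | some (_, true) => 2

noncomputable def wk : Sym2 (Vk k) → ℝ :=
  Sym2.lift ⟨fun x y => ga k x + ga k y + 1, fun _ _ => by ring⟩

def EG : Set (Sym2 (Vk k)) :=
  {e | ∃ j : Fin k, e = s(rt, A j) ∨ e = s(rt, B j) ∨ e = s(A j, B j)}

def ET (i : ℕ) : Set (Sym2 (Vk k)) :=
  {e | ∃ j : Fin k, e = s(rt, A j) ∨ (¬ ((j : ℕ) < i) ∧ e = s(rt, B j)) ∨
      (((j : ℕ) < i) ∧ e = s(A j, B j))}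

def Gk : SimpleGraph (Vk k) := SimpleGraph.fromEdgeSet (EG k)
def Tk (i : ℕ) : SimpleGraph (Vk k) := SimpleGraph.fromEdgeSet (ET k i)

-- simple distinctness facts
lemma rt_ne_A (j : Fin k) : (rt : Vk k) ≠ A j := by simp [rt, A]
lemma rt_ne_B (j : Fin k) : (rt : Vk k) ≠ B j := by simp [rt, B]
lemma A_ne_B (j j' : Fin k) : (A j : Vk k) ≠ B j' := by simp [A, B]
lemma A_inj {j j' : Fin k} (h : (A j : Vk k) = A j') : j = j' := by
  simpa [A] using h
lemma B_inj {j j' : Fin k} (h : (B j : Vk k) = B j') : j = j' := by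
  simpa [B] using h

lemma wk_rA (j : Fin k) : wk k s(rt, A j) = 3 := by simp [wk, rt, A, ga]; ring
lemma wk_rB (j : Fin k) : wk k s(rt, B j) = 5 := by simp [wk, rt, B, ga]; ring
lemma wk_AB (j j' : Fin k) : wk k s(A j, B j') = 3 := by simp [wk, A, B, ga]; ring

lemma wk_pos : ∀ x, 0 < wk k x := by
  intro x
  induction x using Sym2.ind with
  | _ a b =>
    have h1 : 0 ≤ ga k a := by cases a with
      | none => norm_num [ga]
      | some p => rcases p with ⟨j, _ | _⟩ <;> norm_num [ga]
    have h2 : 0 ≤ ga k b := by cases b with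
      | none => norm_num [ga]
      | some p => rcases p with ⟨j, _ | _⟩ <;> norm_num [ga]
    simp only [wk, Sym2.lift_mk]
    linarith

lemma wk_mem_EG {e : Sym2 (Vk k)} (he : e ∈ EG k) : wk k e = 3 ∨ wk k e = 5 := by
  obtain ⟨j, h | h | h⟩ := he <;> subst h
  · exact Or.inl (wk_rA k j)
  · exact Or.inr (wk_rB k j)
  · exact Or.inl (wk_AB k j j)

lemma EG_nodiag {e : Sym2 (Vk k)} (he : e ∈ EG k) : ¬ e.IsDiag := by
  obtain ⟨j, h | h | h⟩ := he <;> subst h <;>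
    simp [Sym2.isDiag_iff_proj_eq, rt, A, B]

lemma ET_subset_EG (i : ℕ) : ET k i ⊆ EG k := by
  rintro e ⟨j, h | ⟨_, h⟩ | ⟨_, h⟩⟩ <;> exact ⟨j, by tauto⟩

lemma edgeSet_Gk : (Gk k).edgeSet = EG k := by
  rw [Gk, edgeSet_fromEdgeSet]
  exact sdiff_eq_left.2 (Set.disjoint_left.2 fun e he hd => (EG_nodiag k he) hd)

lemma edgeSet_Tk (i : ℕ) : (Tk k i).edgeSet = ET k i := by
  rw [Tk, edgeSet_fromEdgeSet]
  exact sdiff_eq_left.2 (Set.disjoint_left.2 fun e he hd => (EG_nodiag k (ET_subset_EG k i he)) hd)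


-- adjacency characterizations
lemma Gk_adj {x y : Vk k} : (Gk k).Adj x y ↔ s(x,y) ∈ EG k ∧ x ≠ y := fromEdgeSet_adj _
lemma Tk_adj {i : ℕ} {x y : Vk k} : (Tk k i).Adj x y ↔ s(x,y) ∈ ET k i ∧ x ≠ y := fromEdgeSet_adj _

lemma Gk_adj_rA (j : Fin k) : (Gk k).Adj rt (A j) := (Gk_adj k).2 ⟨⟨j, by tauto⟩, rt_ne_A k j⟩
lemma Gk_adj_rB (j : Fin k) : (Gk k).Adj rt (B j) := (Gk_adj k).2 ⟨⟨j, by tauto⟩, rt_ne_B k j⟩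
lemma Gk_adj_AB (j : Fin k) : (Gk k).Adj (A j) (B j) := (Gk_adj k).2 ⟨⟨j, by tauto⟩, A_ne_B k j j⟩

lemma Gk_conn : (Gk k).Connected := by
  rw [connected_iff]
  refine ⟨fun u v => ?_, ⟨rt⟩⟩
  have key : ∀ u : Vk k, (Gk k).Reachable rt u := by
    intro u
    match u with
    | none => exact Reachable.refl _
    | some (j, false) => exact (Gk_adj_rA k j).reachable
    | some (j, true) => exact (Gk_adj_rB k j).reachable
  exact (key u).symm.trans (key v)

lemma Tk_adj_rA (i : ℕ) (j : Fin k) : (Tk k i).Adj rt (A j) :=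
  (Tk_adj k).2 ⟨⟨j, by tauto⟩, rt_ne_A k j⟩
lemma Tk_adj_rB (i : ℕ) (j : Fin k) (h : ¬ ((j:ℕ) < i)) : (Tk k i).Adj rt (B j) :=
  (Tk_adj k).2 ⟨⟨j, by tauto⟩, rt_ne_B k j⟩
lemma Tk_adj_AB (i : ℕ) (j : Fin k) (h : (j:ℕ) < i) : (Tk k i).Adj (A j) (B j) :=
  (Tk_adj k).2 ⟨⟨j, by tauto⟩, A_ne_B k j j⟩

lemma Tk_conn (i : ℕ) : (Tk k i).Connected := by
  rw [connected_iff]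
  refine ⟨fun u v => ?_, ⟨rt⟩⟩
  have key : ∀ u : Vk k, (Tk k i).Reachable rt u := by
    intro u
    match u with
    | none => exact Reachable.refl _
    | some (j, false) => exact (Tk_adj_rA k i j).reachable
    | some (j, true) =>
      by_cases h : (j:ℕ) < i
      · exact ((Tk_adj_rA k i j).reachable).trans (Tk_adj_AB k i j h).reachable
      · exact (Tk_adj_rB k i j h).reachable
  exact (key u).symm.trans (key v)

/-- reachability stays in a predicate closed under adjacency -/
lemma reach_closed {W : Type*} {H : SimpleGraph W} (P : W → Prop)
    (hP : ∀ x y, H.Adj x y → P x → P y) {a b : W} (h : H.Reachable a b) (ha : P a) : P b := by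
  obtain ⟨p⟩ := h
  induction p with
  | nil => exact ha
  | cons hadj _ ih => exact ih (hP _ _ hadj ha)


lemma adj_A_cases {i : ℕ} {j : Fin k} {y : Vk k} (h : (Tk k i).Adj (A j) y) :
    y = rt ∨ ((j:ℕ) < i ∧ y = B j) := by
  obtain ⟨⟨j', hm | ⟨hj', hm⟩ | ⟨hj', hm⟩⟩, hne⟩ := (Tk_adj k).1 h <;>
    rw [Sym2.eq_iff] at hm
  · rcases hm with ⟨h1, -⟩ | ⟨-, h2⟩
    · exact absurd h1 (by simp [rt, A])
    · exact Or.inl h2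
  · rcases hm with ⟨h1, -⟩ | ⟨h1, -⟩
    · exact absurd h1 (by simp [rt, A])
    · exact absurd h1 (by simp [A, B])
  · rcases hm with ⟨h1, h2⟩ | ⟨h1, -⟩
    · refine Or.inr ⟨?_, ?_⟩
      · rwa [A_inj k h1]
      · rw [h2, A_inj k h1]
    · exact absurd h1 (by simp [A, B])

lemma adj_B_cases {i : ℕ} {j : Fin k} {y : Vk k} (h : (Tk k i).Adj (B j) y) :
    (¬ (j:ℕ) < i ∧ y = rt) ∨ ((j:ℕ) < i ∧ y = A j) := by
  obtain ⟨⟨j', hm | ⟨hj', hm⟩ | ⟨hj', hm⟩⟩, hne⟩ := (Tk_adj k).1 h <;>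
    rw [Sym2.eq_iff] at hm
  · rcases hm with ⟨h1, -⟩ | ⟨h1, -⟩
    · exact absurd h1 (by simp [rt, B])
    · exact absurd h1.symm (by simp [A, B])
  · rcases hm with ⟨h1, -⟩ | ⟨h1, h2⟩
    · exact absurd h1 (by simp [rt, B])
    · refine Or.inl ⟨?_, h2⟩
      rwa [B_inj k h1]
  · rcases hm with ⟨h1, -⟩ | ⟨h1, h2⟩
    · exact absurd h1.symm (by simp [A, B])
    · refine Or.inr ⟨?_, ?_⟩
      · rwa [B_inj k h1]
      · rw [h2, B_inj k h1]

lemma del_adj {i : ℕ} {e : Sym2 (Vk k)} {x y : Vk k}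
    (h : (Tk k i \ SimpleGraph.fromEdgeSet {e}).Adj x y) :
    (Tk k i).Adj x y ∧ s(x, y) ≠ e := by
  rw [sdiff_adj, fromEdgeSet_adj] at h
  exact ⟨h.1, fun he => h.2 ⟨he, h.1.ne⟩⟩

lemma Tk_acyclic (i : ℕ) : (Tk k i).IsAcyclic := by
  rw [isAcyclic_iff_forall_edge_isBridge]
  intro e he
  rw [edgeSet_Tk] at he
  obtain ⟨j, hj | ⟨hji, hj⟩ | ⟨hji, hj⟩⟩ := he <;> subst hj
  · rw [isBridge_iff]
    refine fun hr => ?_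
    have hP : ∀ x y, (Tk k i \ SimpleGraph.fromEdgeSet {s(rt, A j)}).Adj x y →
        (x = A j ∨ ((j:ℕ) < i ∧ x = B j)) → (y = A j ∨ ((j:ℕ) < i ∧ y = B j)) := by
      rintro x y hxy (rfl | ⟨hlt, rfl⟩)
      · obtain ⟨hadj, hne⟩ := del_adj k hxy
        rcases adj_A_cases k hadj with rfl | ⟨hlt, rfl⟩
        · exact absurd (Sym2.eq_swap) hne
        · exact Or.inr ⟨hlt, rfl⟩
      · obtain ⟨hadj, hne⟩ := del_adj k hxy
        rcases adj_B_cases k hadj with ⟨hn, -⟩ | ⟨-, rfl⟩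
        · exact absurd hlt hn
        · exact Or.inl rfl
    have := reach_closed _ hP hr.symm (Or.inl rfl)
    rcases this with h | ⟨-, h⟩
    · exact rt_ne_A k j h
    · exact rt_ne_B k j h
  · rw [isBridge_iff]
    refine fun hr => ?_
    have hP : ∀ x y, (Tk k i \ SimpleGraph.fromEdgeSet {s(rt, B j)}).Adj x y →
        x = B j → y = B j := by
      rintro x y hxy rfl
      obtain ⟨hadj, hne⟩ := del_adj k hxy
      rcases adj_B_cases k hadj with ⟨-, rfl⟩ | ⟨hlt, -⟩
      · exact absurd (Sym2.eq_swap) hne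
      · exact absurd hlt hji
    exact rt_ne_B k j (reach_closed _ hP hr.symm rfl)
  · rw [isBridge_iff]
    refine fun hr => ?_
    have hP : ∀ x y, (Tk k i \ SimpleGraph.fromEdgeSet {s(A j, B j)}).Adj x y →
        x = B j → y = B j := by
      rintro x y hxy rfl
      obtain ⟨hadj, hne⟩ := del_adj k hxy
      rcases adj_B_cases k hadj with ⟨hn, -⟩ | ⟨-, rfl⟩
      · exact absurd hji hn
      · exact absurd (Sym2.eq_swap) hne
    exact (A_ne_B k j j) (reach_closed _ hP hr.symm rfl)


lemma Tk_isTree (i : ℕ) : (Tk k i).IsTree :=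
  ⟨Tk_conn k i, Tk_acyclic k i⟩

/-! ### counting and weights -/

def Fg : (Fin k × Bool) ⊕ Fin k → Sym2 (Vk k)
  | Sum.inl (j, c) => s(rt, (some (j, c) : Vk k))
  | Sum.inr j => s(A j, B j)

lemma Fg_inj : Function.Injective (Fg k) := by
  rintro (⟨j, c⟩ | j) (⟨j', c'⟩ | j') h <;>
    simp only [Fg, Sym2.eq_iff, rt, A, B, Option.some.injEq, Prod.mk.injEq,
      reduceCtorEq, false_and, and_false, or_false, false_or, and_true, true_and] at h
  · obtain ⟨rfl, rfl⟩ := h; rfl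
  · obtain ⟨rfl, -⟩ := h; rfl

lemma EG_eq_range : EG k = Set.range (Fg k) := by
  ext e
  constructor
  · rintro ⟨j, h | h | h⟩
    · exact ⟨Sum.inl (j, false), h.symm⟩
    · exact ⟨Sum.inl (j, true), h.symm⟩
    · exact ⟨Sum.inr j, h.symm⟩
  · rintro ⟨(⟨j, c⟩ | j), rfl⟩
    · refine ⟨j, ?_⟩; cases c
      · exact Or.inl rfl
      · exact Or.inr (Or.inl rfl)
    · exact ⟨j, Or.inr (Or.inr rfl)⟩

lemma EG_ncard : (EG k).ncard = 3 * k := by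
  classical
  rw [EG_eq_range, ← Set.image_univ, ← Finset.coe_univ, ← Finset.coe_image,
    Set.ncard_coe_finset, Finset.card_image_of_injective _ (Fg_inj k)]
  simp [Fintype.card_sum, Fintype.card_prod]
  ring

lemma card_Vk : Fintype.card (Vk k) = 2 * k + 1 := by
  simp [Fintype.card_option, Fintype.card_prod]
  ring

lemma treeWeight_of_finset {T : SimpleGraph (Vk k)} {F : Finset (Sym2 (Vk k))}
    (h : T.edgeSet = ↑F) : treeWeight (wk k) T = ∑ e ∈ F, wk k e := by
  rw [treeWeight, h, finsum_mem_coe_finset]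

def F0 : Fin k × Bool → Sym2 (Vk k) := fun p => s(rt, (some p : Vk k))

lemma F0_inj : Function.Injective (F0 k) := by
  rintro ⟨j, c⟩ ⟨j', c'⟩ h
  simp only [F0, Sym2.eq_iff, rt, Option.some.injEq, reduceCtorEq,
    false_and, and_false, or_false, true_and] at h
  simpa using h

def F1 : Fin k × Bool → Sym2 (Vk k) := fun p =>
  if p.2 then s(A p.1, B p.1) else s(rt, A p.1)

lemma F1_inj : Function.Injective (F1 k) := by
  rintro ⟨j, c⟩ ⟨j', c'⟩ h
  cases c <;> cases c' <;>
    simp only [F1, if_true, if_false, Bool.false_eq_true, Sym2.eq_iff, rt, A, B,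
      Option.some.injEq, Prod.mk.injEq, reduceCtorEq,
      false_and, and_false, or_false, false_or, true_and, and_true] at h
  all_goals first
    | (obtain (⟨rfl, -⟩ | h) := h
       · rfl
       · exact absurd h (by simp))
    | (obtain ⟨rfl, -⟩ := h; rfl)

lemma ET0_eq : ET k 0 = ↑(Finset.image (F0 k) Finset.univ) := by
  classical
  ext e
  simp only [Finset.coe_image, Finset.coe_univ, Set.image_univ, Set.mem_range]
  constructor
  · rintro ⟨j, h | ⟨-, h⟩ | ⟨hlt, -⟩⟩
    · exact ⟨(j, false), h.symm⟩
    · exact ⟨(j, true), h.symm⟩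
    · omega
  · rintro ⟨⟨j, c⟩, rfl⟩
    refine ⟨j, ?_⟩
    cases c
    · exact Or.inl rfl
    · exact Or.inr (Or.inl ⟨by omega, rfl⟩)

lemma ETk_eq : ET k k = ↑(Finset.image (F1 k) Finset.univ) := by
  classical
  ext e
  simp only [Finset.coe_image, Finset.coe_univ, Set.image_univ, Set.mem_range]
  constructor
  · rintro ⟨j, h | ⟨hn, -⟩ | ⟨-, h⟩⟩
    · exact ⟨(j, false), h.symm⟩
    · exact absurd j.isLt hn
    · exact ⟨(j, true), h.symm⟩
  · rintro ⟨⟨j, c⟩, rfl⟩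
    refine ⟨j, ?_⟩
    cases c
    · exact Or.inl rfl
    · exact Or.inr (Or.inr ⟨j.isLt, rfl⟩)

lemma weight_T0 : treeWeight (wk k) (Tk k 0) = 8 * k := by
  classical
  rw [treeWeight_of_finset k (by rw [edgeSet_Tk]; exact ET0_eq k),
    Finset.sum_image (fun x _ y _ h => F0_inj k h)]
  rw [Fintype.sum_prod_type]
  have : ∀ j : Fin k, ∑ c : Bool, wk k (F0 k (j, c)) = 8 := by
    intro j
    rw [Fintype.sum_bool]
    have h1 : wk k (F0 k (j, true)) = 5 := wk_rB k j
    have h2 : wk k (F0 k (j, false)) = 3 := wk_rA k j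
    rw [h1, h2]; norm_num
  rw [Finset.sum_congr rfl (fun j _ => this j), Finset.sum_const, Finset.card_univ,
    Fintype.card_fin, nsmul_eq_mul]
  ring

lemma weight_Tk : treeWeight (wk k) (Tk k k) = 6 * k := by
  classical
  rw [treeWeight_of_finset k (by rw [edgeSet_Tk]; exact ETk_eq k),
    Finset.sum_image (fun x _ y _ h => F1_inj k h)]
  rw [Fintype.sum_prod_type]
  have : ∀ j : Fin k, ∑ c : Bool, wk k (F1 k (j, c)) = 6 := by
    intro j
    rw [Fintype.sum_bool]
    have h1 : wk k (F1 k (j, true)) = 3 := wk_AB k j j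
    have h2 : wk k (F1 k (j, false)) = 3 := wk_rA k j
    rw [h1, h2]; norm_num
  rw [Finset.sum_congr rfl (fun j _ => this j), Finset.sum_const, Finset.card_univ,
    Fintype.card_fin, nsmul_eq_mul]
  ring

lemma mst_min {T' : SimpleGraph (Vk k)} (h : IsSpanningTree (Gk k) T') :
    treeWeight (wk k) (Tk k k) ≤ treeWeight (wk k) T' := by
  classical
  haveI : Fintype T'.edgeSet := (Set.toFinite T'.edgeSet).fintype
  have hW : treeWeight (wk k) T' = ∑ e ∈ T'.edgeFinset, wk k e :=
    treeWeight_of_finset k (T'.coe_edgeFinset).symm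
  have hcard : T'.edgeFinset.card = 2 * k := by
    have := h.2.card_edgeFinset
    rw [card_Vk] at this
    omega
  have hsub : T'.edgeSet ⊆ EG k := by
    rw [← edgeSet_Gk]
    exact edgeSet_mono h.1
  have hbound : ∀ e ∈ T'.edgeFinset, (3 : ℝ) ≤ wk k e := by
    intro e he
    rcases wk_mem_EG k (hsub (mem_edgeFinset.1 he)) with h3 | h5
    · rw [h3]
    · rw [h5]; norm_num
  calc treeWeight (wk k) (Tk k k) = 6 * k := weight_Tk k
    _ = T'.edgeFinset.card * 3 := by rw [hcard]; push_cast; ring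
    _ = ∑ _e ∈ T'.edgeFinset, (3:ℝ) := by rw [Finset.sum_const, nsmul_eq_mul]
    _ ≤ ∑ e ∈ T'.edgeFinset, wk k e := Finset.sum_le_sum hbound
    _ = treeWeight (wk k) T' := hW.symm

lemma ET_succ (i : ℕ) (hi : i < k) :
    ET k (i + 1) = (ET k i \ {s(rt, B ⟨i, hi⟩)}) ∪ {s(A ⟨i, hi⟩, B ⟨i, hi⟩)} := by
  set j₀ : Fin k := ⟨i, hi⟩ with hj₀
  ext e
  constructor
  · rintro ⟨j, h | ⟨hn, h⟩ | ⟨hlt, h⟩⟩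
    · refine Or.inl ⟨⟨j, Or.inl h⟩, ?_⟩
      subst h
      simp [Sym2.eq_iff, rt, A, B]
    · refine Or.inl ⟨⟨j, Or.inr (Or.inl ⟨by omega, h⟩)⟩, ?_⟩
      subst h
      simp only [Set.mem_singleton_iff, Sym2.eq_iff, rt, A, B, Option.some.injEq,
        Prod.mk.injEq, reduceCtorEq, false_and, and_false, or_false, true_and, and_true]
      intro hcon
      rw [Fin.ext_iff] at hcon
      simp only [hj₀] at hcon
      omega
    · by_cases hji : (j : ℕ) < i
      · refine Or.inl ⟨⟨j, Or.inr (Or.inr ⟨hji, h⟩)⟩, ?_⟩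
        subst h
        simp [Sym2.eq_iff, rt, A, B]
      · have : j = j₀ := by
          apply Fin.ext
          simp only [hj₀]
          omega
        subst this
        exact Or.inr (by simpa using h)
  · rintro (⟨⟨j, h | ⟨hn, h⟩ | ⟨hlt, h⟩⟩, hne⟩ | h)
    · exact ⟨j, Or.inl h⟩
    · refine ⟨j, Or.inr (Or.inl ⟨?_, h⟩)⟩
      intro hcon
      have hji : (j : ℕ) = i := by omega
      apply hne
      subst h
      have : j = j₀ := Fin.ext (by simp only [hj₀]; omega)
      subst this
      rfl
    · exact ⟨j, Or.inr (Or.inr ⟨by omega, h⟩)⟩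
    · simp only [Set.mem_singleton_iff] at h
      exact ⟨j₀, Or.inr (Or.inr ⟨by simp [hj₀], h⟩)⟩

lemma improve_step (i : ℕ) (hi : i < k) :
    ImproveStep (Gk k) (wk k) (Tk k i) (Tk k (i + 1)) := by
  set j₀ : Fin k := ⟨i, hi⟩ with hj₀
  refine ⟨A j₀, B j₀, s(rt, B j₀), Gk_adj_AB k j₀, ?_, ?_, ?_, ?_, ?_⟩
  · rw [edgeSet_Tk]
    rintro ⟨j, h | ⟨-, h⟩ | ⟨hlt, h⟩⟩
    · rw [Sym2.eq_iff] at h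
      revert h
      simp [rt, A, B]
    · rw [Sym2.eq_iff] at h
      revert h
      simp [rt, A, B]
    · rw [Sym2.eq_iff] at h
      simp only [A, B, Option.some.injEq, Prod.mk.injEq, reduceCtorEq,
        false_and, and_false, or_false, and_true, true_and] at h
      obtain ⟨rfl, -⟩ := h
      simp [hj₀] at hlt
  · rw [edgeSet_Tk]
    exact ⟨j₀, Or.inr (Or.inl ⟨by simp [hj₀], rfl⟩)⟩
  · refine ⟨Walk.cons ((Tk_adj_rA k i j₀).symm)
      (Walk.cons (Tk_adj_rB k i j₀ (by simp [hj₀])) Walk.nil), ?_, ?_⟩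
    · rw [Walk.isPath_def]
      simp only [Walk.support_cons, Walk.support_nil]
      simp [rt, A, B, List.nodup_cons]
    · simp
  · rw [wk_AB, wk_rB]; norm_num
  · rw [Tk, edgeSet_Tk, ET_succ k i hi]

lemma step_weight {Tc Tn : SimpleGraph (Vk k)} (hsub : Tc.edgeSet ⊆ EG k)
    (h : ImproveStep (Gk k) (wk k) Tc Tn) :
    Tn.edgeSet ⊆ EG k ∧ treeWeight (wk k) Tn = treeWeight (wk k) Tc - 2 := by
  classical
  obtain ⟨u, v, f, hadj, hnm, hmem, -, hlt, rfl⟩ := h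
  set e := s(u, v) with he
  have heE : e ∈ EG k := by
    have := ((Gk_adj k).1 hadj).1
    rwa [← he] at this
  have hfE : f ∈ EG k := hsub hmem
  have hwe : wk k e = 3 ∧ wk k f = 5 := by
    rcases wk_mem_EG k heE with h1 | h1 <;> rcases wk_mem_EG k hfE with h2 | h2 <;>
      constructor <;> first | assumption | (exfalso; rw [h1, h2] at hlt; linarith)
  have hSsub : (Tc.edgeSet \ {f}) ∪ {e} ⊆ EG k := by
    rintro x (⟨hx, -⟩ | hx)
    · exact hsub hx
    · rwa [Set.mem_singleton_iff.1 hx]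
  have hES : (SimpleGraph.fromEdgeSet ((Tc.edgeSet \ {f}) ∪ {e})).edgeSet
      = (Tc.edgeSet \ {f}) ∪ {e} := by
    rw [edgeSet_fromEdgeSet]
    exact sdiff_eq_left.2
      (Set.disjoint_left.2 fun x hx hd => (EG_nodiag k (hSsub hx)) hd)
  set F : Finset (Sym2 (Vk k)) := (Set.toFinite Tc.edgeSet).toFinset with hF
  have hFc : Tc.edgeSet = ↑F := (Set.Finite.coe_toFinset _).symm
  have hfF : f ∈ F := by rw [hF]; simpa using hmem
  have heF : e ∉ F := by rw [hF]; simpa using hnm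
  have hcoe : (Tc.edgeSet \ {f}) ∪ {e} = ↑(insert e (F.erase f)) := by
    rw [Finset.coe_insert, Finset.coe_erase, ← hFc]
    rw [Set.union_comm]
    rfl
  constructor
  · rw [hES]; exact hSsub
  · rw [treeWeight_of_finset k (by rw [hES, hcoe]), treeWeight_of_finset k hFc,
      Finset.sum_insert (by simp [heF]), ← Finset.sum_erase_add F _ hfF, hwe.1, hwe.2]
    ring

lemma traj (S : ℕ → SimpleGraph (Vk k)) (m : ℕ) (hS0 : S 0 = Tk k 0)
    (hstep : ∀ i < m, ImproveStep (Gk k) (wk k) (S i) (S (i + 1))) :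
    ∀ i ≤ m, (S i).edgeSet ⊆ EG k ∧ treeWeight (wk k) (S i) = 8 * k - 2 * i := by
  intro i
  induction i with
  | zero =>
    intro _
    rw [hS0, edgeSet_Tk]
    refine ⟨ET_subset_EG k 0, ?_⟩
    rw [weight_T0]
    push_cast
    ring
  | succ n ih =>
    intro hn
    obtain ⟨hsub, hw⟩ := ih (by omega)
    obtain ⟨hsub', hw'⟩ := step_weight k hsub (hstep n (by omega))
    refine ⟨hsub', ?_⟩
    rw [hw', hw]
    push_cast
    ring

end LBF


/-- Lower-bound family: for every `k` there is a finite connected weighted graph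
with `m - n + 1 = k` non-tree edges and an initial spanning tree from which a
sequence of exactly `k` successive improvements reaches a minimum spanning tree,
and moreover every improvement sequence from that initial tree reaching a
minimum spanning tree performs at least `k` improvements (each non-tree edge is
exchanged at most once). -/
theorem improvement_lower_bound_family (k : ℕ) :
    ∃ (V : Type) (_ : Fintype V) (G : SimpleGraph V) (w : Sym2 V → ℝ)
      (T : ℕ → SimpleGraph V),
      (∀ x, 0 < w x) ∧ G.Connected ∧ IsSpanningTree G (T 0) ∧
      G.edgeSet.ncard = (Fintype.card V - 1) + k ∧
      (∀ i < k, ImproveStep G w (T i) (T (i + 1))) ∧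
      (∀ T', IsSpanningTree G T' → treeWeight w (T k) ≤ treeWeight w T') ∧
      (∀ (S : ℕ → SimpleGraph V) (m : ℕ), S 0 = T 0 →
        (∀ i < m, ImproveStep G w (S i) (S (i + 1))) →
        (∀ T', IsSpanningTree G T' → treeWeight w (S m) ≤ treeWeight w T') →
        k ≤ m) := by
  classical
  refine ⟨LBF.Vk k, inferInstance, LBF.Gk k, LBF.wk k, LBF.Tk k,
    LBF.wk_pos k, LBF.Gk_conn k, ⟨?_, LBF.Tk_isTree k 0⟩, ?_, ?_, ?_, ?_⟩
  · exact SimpleGraph.fromEdgeSet_mono (LBF.ET_subset_EG k 0)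
  · rw [LBF.edgeSet_Gk, LBF.EG_ncard, LBF.card_Vk]
    omega
  · exact fun i hi => LBF.improve_step k i hi
  · exact fun T' hT' => LBF.mst_min k hT'
  · intro S m hS0 hsteps hmin
    have htraj := (LBF.traj k S m hS0 hsteps) m le_rfl
    have hmin' := hmin (LBF.Tk k k)
      ⟨SimpleGraph.fromEdgeSet_mono (LBF.ET_subset_EG k k), LBF.Tk_isTree k k⟩
    rw [htraj.2, LBF.weight_Tk k] at hmin'
    have : (k : ℝ) ≤ (m : ℝ) := by linarith
    exact_mod_cast this
end

section
/- Let G be a finite connected weighted graph where edge weights need not be distinct. Then G has at least one minimum spanning tree, and a spanning tree T is a minimum spanning tree if and only if no improvement is applicable to T. -/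
open SimpleGraph Set

section Aux

variable {V : Type*}

private lemma reach_of_walk {H K : SimpleGraph V}
    (h : ∀ x y, H.Adj x y → K.Reachable x y) :
    ∀ {a b : V}, H.Walk a b → K.Reachable a b := by
  intro a b p
  induction p with
  | nil => exact Reachable.refl _
  | cons ha _ ih => exact (h _ _ ha).trans ih

private lemma connected_transfer {H K : SimpleGraph V} (hH : H.Connected)
    (h : ∀ x y, H.Adj x y → K.Reachable x y) : K.Connected := by
  haveI : Nonempty V := hH.nonempty
  refine SimpleGraph.Connected.mk fun a b => ?_
  obtain ⟨p⟩ := hH.preconnected a b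
  exact reach_of_walk h p

private lemma reach_avoid {H K : SimpleGraph V} {f : Sym2 V}
    (hsub : ∀ e ∈ H.edgeSet, e ≠ f → e ∈ K.edgeSet) :
    ∀ {a b : V} (q : H.Walk a b), f ∉ q.edges → K.Reachable a b := by
  intro a b q
  induction q with
  | nil => exact fun _ => Reachable.refl _
  | cons ha r ih =>
    intro hf
    rw [SimpleGraph.Walk.edges_cons, List.mem_cons] at hf
    push_neg at hf
    have hK := (SimpleGraph.mem_edgeSet _).1
      (hsub _ ((SimpleGraph.mem_edgeSet _).2 ha) (Ne.symm hf.1))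
    exact hK.reachable.trans (ih hf.2)

private lemma reach_endpoints {H K : SimpleGraph V} {f : Sym2 V}
    (hsub : ∀ e ∈ H.edgeSet, e ≠ f → e ∈ K.edgeSet) :
    ∀ {a b : V} (q : H.Walk a b), q.edges.Nodup → f ∈ q.edges → K.Reachable a b →
      ∀ x y : V, s(x, y) = f → K.Reachable x y := by
  intro a b q
  induction q with
  | nil => intro _ hf; simp at hf
  | @cons a c b ha r ih =>
    intro hnd hf hab x y hxy
    rw [SimpleGraph.Walk.edges_cons] at hf hnd
    rcases List.mem_cons.mp hf with h1 | h2
    · have hfr : f ∉ r.edges := by rw [h1]; exact (List.nodup_cons.mp hnd).1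
      have hcb : K.Reachable c b := reach_avoid hsub r hfr
      have hac : K.Reachable a c := hab.trans hcb.symm
      rw [h1, Sym2.eq_iff] at hxy
      rcases hxy with ⟨rfl, rfl⟩ | ⟨rfl, rfl⟩
      · exact hac
      · exact hac.symm
    · have hne : s(a, c) ≠ f := by rintro rfl; exact (List.nodup_cons.mp hnd).1 h2
      have hKac := (SimpleGraph.mem_edgeSet _).1
        (hsub _ ((SimpleGraph.mem_edgeSet _).2 ha) hne)
      exact ih (List.nodup_cons.mp hnd).2 h2 (hKac.reachable.symm.trans hab) x y hxy

private lemma exists_cross_s12 {H : SimpleGraph V} (S : Set V) :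
    ∀ {a b : V} (p : H.Walk a b), a ∈ S → b ∉ S →
      ∃ c d, H.Adj c d ∧ s(c, d) ∈ p.edges ∧ c ∈ S ∧ d ∉ S := by
  intro a b p
  induction p with
  | nil => intro h1 h2; exact absurd h1 h2
  | @cons a c b ha r ih =>
    intro h1 h2
    by_cases hc : c ∈ S
    · obtain ⟨x, y, hxy, hmem, hx, hy⟩ := ih hc h2
      exact ⟨x, y, hxy, by simp [hmem], hx, hy⟩
    · exact ⟨a, c, ha, by simp, h1, hc⟩

private lemma tree_ncard {V : Type*} [Fintype V] {T : SimpleGraph V} (hT : T.IsTree) :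
    T.edgeSet.ncard + 1 = Fintype.card V := by
  classical
  haveI : Fintype T.edgeSet := (Set.toFinite _).fintype
  rw [Set.ncard_eq_toFinset_card']
  simpa [SimpleGraph.edgeFinset] using hT.card_edgeFinset

private lemma exists_tree_le {V : Type*} [Fintype V] (H : SimpleGraph V)
    (hH : H.Connected) : ∃ T, T ≤ H ∧ T.IsTree := by
  classical
  generalize hn : H.edgeSet.ncard = n
  induction n using Nat.strong_induction_on generalizing H with
  | _ n ih =>
    by_cases hac : H.IsAcyclic
    · exact ⟨H, le_rfl, ⟨hH, hac⟩⟩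
    · rw [isAcyclic_iff_forall_adj_isBridge] at hac
      push_neg at hac
      obtain ⟨x, y, hxy, hbr⟩ := hac
      rw [isBridge_iff] at hbr
      push_neg at hbr
      have hreach : (H \ SimpleGraph.fromEdgeSet {s(x, y)}).Reachable x y := hbr
      set H' := H \ SimpleGraph.fromEdgeSet {s(x, y)} with hH'
      have hE : H'.edgeSet = H.edgeSet \ {s(x, y)} := by
        rw [hH', edgeSet_sdiff, edgeSet_fromEdgeSet]
        ext e
        simp only [Set.mem_diff, Set.mem_singleton_iff, Set.mem_setOf_eq]
        constructor
        · rintro ⟨h1, h2⟩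
          exact ⟨h1, fun h => h2 ⟨h, H.not_isDiag_of_mem_edgeSet h1⟩⟩
        · rintro ⟨h1, h2⟩
          exact ⟨h1, fun h => h2 h.1⟩
      have hconn : H'.Connected := by
        refine connected_transfer hH (fun a b hab => ?_)
        by_cases hs : s(a, b) = s(x, y)
        · rw [Sym2.eq_iff] at hs
          rcases hs with ⟨rfl, rfl⟩ | ⟨rfl, rfl⟩
          · exact hreach
          · exact hreach.symm
        · refine (SimpleGraph.Adj.reachable ?_)
          rw [← SimpleGraph.mem_edgeSet, hE]
          exact ⟨(SimpleGraph.mem_edgeSet _).2 hab, hs⟩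
      have hlt : H'.edgeSet.ncard < n := by
        rw [hE, ← hn]
        exact Set.ncard_diff_singleton_lt_of_mem ((SimpleGraph.mem_edgeSet _).2 hxy)
          (Set.toFinite _)
      obtain ⟨T, hle, hT⟩ := ih _ hlt H' hconn rfl
      exact ⟨T, hle.trans sdiff_le, hT⟩

private lemma isTree_of_connected_card {V : Type*} [Fintype V] {H : SimpleGraph V}
    (hc : H.Connected) (hcard : H.edgeSet.ncard + 1 = Fintype.card V) : H.IsTree := by
  obtain ⟨T, hle, hT⟩ := exists_tree_le H hc
  have hsub : T.edgeSet ⊆ H.edgeSet := edgeSet_mono hle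
  have hTc := tree_ncard hT
  have heq : T.edgeSet = H.edgeSet :=
    Set.eq_of_subset_of_ncard_le hsub (by omega) (Set.toFinite _)
  rwa [← SimpleGraph.edgeSet_inj.mp heq]

/-- The exchange lemma: swapping a tree edge `f` on the fundamental cycle of a
non-tree pair `u v` for `s(u,v)` yields a tree with the expected edge set. -/
private lemma exchange {V : Type*} [Fintype V] {T : SimpleGraph V} (hT : T.IsTree)
    {u v : V} (huv : u ≠ v) (he : s(u, v) ∉ T.edgeSet) {f : Sym2 V}
    (hf : f ∈ T.edgeSet) (hcyc : InFundCycle T u v f) :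
    (SimpleGraph.fromEdgeSet ((T.edgeSet \ {f}) ∪ {s(u, v)})).edgeSet
        = (T.edgeSet \ {f}) ∪ {s(u, v)} ∧
    (SimpleGraph.fromEdgeSet ((T.edgeSet \ {f}) ∪ {s(u, v)})).IsTree := by
  classical
  set A : Set (Sym2 V) := (T.edgeSet \ {f}) ∪ {s(u, v)} with hA
  set K := SimpleGraph.fromEdgeSet A with hK
  have hAnd : ∀ e ∈ A, ¬ e.IsDiag := by
    rintro e (⟨h1, _⟩ | h2)
    · exact T.not_isDiag_of_mem_edgeSet h1
    · rw [Set.mem_singleton_iff] at h2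
      subst h2
      simpa using huv
  have hedge : K.edgeSet = A := by
    rw [hK, edgeSet_fromEdgeSet]
    ext e
    simp only [Set.mem_diff, Set.mem_setOf_eq]
    exact ⟨fun h => h.1, fun h => ⟨h, hAnd e h⟩⟩
  refine ⟨hedge, ?_⟩
  have hsub : ∀ e ∈ T.edgeSet, e ≠ f → e ∈ K.edgeSet := by
    intro e h1 h2
    rw [hedge]
    exact Or.inl ⟨h1, h2⟩
  have hKuv : K.Adj u v := by
    rw [← SimpleGraph.mem_edgeSet, hedge]
    exact Or.inr rfl
  obtain ⟨p, hp, hfp⟩ := hcyc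
  have hconn : K.Connected := by
    refine connected_transfer hT.isConnected (fun x y hxy => ?_)
    by_cases hs : s(x, y) = f
    · exact reach_endpoints hsub p hp.edges_nodup hfp hKuv.reachable x y hs
    · exact ((SimpleGraph.mem_edgeSet _).1
        (hsub _ ((SimpleGraph.mem_edgeSet _).2 hxy) hs)).reachable
  have hfe : s(u, v) ∉ T.edgeSet \ {f} := fun h => he h.1
  have hcard : A.ncard = T.edgeSet.ncard := by
    have h1 : A.ncard = (T.edgeSet \ {f}).ncard + 1 := by
      rw [hA, Set.union_singleton, Set.ncard_insert_of_notMem hfe (Set.toFinite _)]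
    have h2 : (T.edgeSet \ {f}).ncard + 1 = T.edgeSet.ncard :=
      Set.ncard_diff_singleton_add_one hf (Set.toFinite _)
    omega
  refine isTree_of_connected_card hconn ?_
  rw [hedge, hcard]
  exact tree_ncard hT

private lemma weight_exchange {V : Type*} [Fintype V] (w : Sym2 V → ℝ)
    {T : SimpleGraph V} {u v : V} (he : s(u, v) ∉ T.edgeSet) {f : Sym2 V}
    (hf : f ∈ T.edgeSet)
    (hedge : (SimpleGraph.fromEdgeSet ((T.edgeSet \ {f}) ∪ {s(u, v)})).edgeSet
        = (T.edgeSet \ {f}) ∪ {s(u, v)}) :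
    treeWeight w (SimpleGraph.fromEdgeSet ((T.edgeSet \ {f}) ∪ {s(u, v)}))
      = treeWeight w T - w f + w s(u, v) := by
  have hd1 : Disjoint (T.edgeSet \ {f}) {s(u, v)} := by
    rw [Set.disjoint_singleton_right]
    exact fun h => he h.1
  have hd2 : Disjoint (T.edgeSet \ {f}) {f} := by
    rw [Set.disjoint_singleton_right]
    exact fun h => h.2 rfl
  have hsplit : T.edgeSet = (T.edgeSet \ {f}) ∪ {f} :=
    (Set.diff_union_of_subset (Set.singleton_subset_iff.2 hf)).symm
  unfold treeWeight
  rw [hedge, finsum_mem_union hd1 (Set.toFinite _) (Set.toFinite _),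
    finsum_mem_singleton]
  conv_rhs => rw [hsplit]
  rw [finsum_mem_union hd2 (Set.toFinite _) (Set.toFinite _), finsum_mem_singleton]
  ring

end Aux

/-- A finite connected weighted graph (weights not necessarily distinct) has a
minimum spanning tree, and a spanning tree is minimum if and only if no
improvement is applicable to it. -/
theorem mst_iff_no_improvement {V : Type*} [Fintype V] [Nonempty V]
    (G : SimpleGraph V) (w : Sym2 V → ℝ) (hw : ∀ x, 0 < w x) (hG : G.Connected) :
    (∃ T, IsSpanningTree G T ∧
      ∀ T', IsSpanningTree G T' → treeWeight w T ≤ treeWeight w T') ∧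
    (∀ T, IsSpanningTree G T →
      ((∀ T', IsSpanningTree G T' → treeWeight w T ≤ treeWeight w T') ↔
        (∀ T', ¬ ImproveStep G w T T'))) := by
  classical
  constructor
  · -- existence of a minimum spanning tree
    obtain ⟨T0, hT0le, hT0⟩ := exists_tree_le G hG
    have hfin : {T : SimpleGraph V | IsSpanningTree G T}.Finite := Set.toFinite _
    obtain ⟨T, hT, hmin⟩ := Set.exists_min_image _ (treeWeight w) hfin
      ⟨T0, hT0le, hT0⟩
    exact ⟨T, hT, fun T' hT' => hmin T' hT'⟩
  · rintro T ⟨hTle, hTtree⟩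
    constructor
    · -- minimum → no improvement
      rintro hmin T' ⟨u, v, f, hGuv, he, hf, hcyc, hwlt, rfl⟩
      obtain ⟨hedge, htree'⟩ := exchange hTtree hGuv.ne he hf hcyc
      have hle' : SimpleGraph.fromEdgeSet ((T.edgeSet \ {f}) ∪ {s(u, v)}) ≤ G := by
        rw [← SimpleGraph.edgeSet_subset_edgeSet, hedge]
        rintro e (⟨h1, _⟩ | h2)
        · exact edgeSet_mono hTle h1
        · rw [Set.mem_singleton_iff] at h2
          exact h2 ▸ (SimpleGraph.mem_edgeSet _).2 hGuv
      have hwe := weight_exchange w he hf hedge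
      have := hmin _ ⟨hle', htree'⟩
      linarith
    · -- no improvement → minimum
      intro hni T' hT'
      obtain ⟨hT'le, hT'tree⟩ := hT'
      suffices H : ∀ n (T2 : SimpleGraph V), T2 ≤ G → T2.IsTree →
          (T2.edgeSet \ T.edgeSet).ncard = n → treeWeight w T ≤ treeWeight w T2 from
        H _ T' hT'le hT'tree rfl
      intro n
      induction n using Nat.strong_induction_on with
      | _ n ih =>
        intro T2 hle2 htree2 hcard
        by_cases hsub : T2.edgeSet ⊆ T.edgeSet
        · have hTeq : T2.edgeSet = T.edgeSet :=
            Set.eq_of_subset_of_ncard_le hsub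
              (by have := tree_ncard hTtree; have := tree_ncard htree2; omega)
              (Set.toFinite _)
          rw [SimpleGraph.edgeSet_inj.mp hTeq]
        · rw [Set.not_subset] at hsub
          obtain ⟨e, heT2, heT⟩ := hsub
          induction e using Sym2.ind with
          | _ u v =>
          have hT2uv : T2.Adj u v := (SimpleGraph.mem_edgeSet _).1 heT2
          have hGuv : G.Adj u v := hle2 hT2uv
          obtain ⟨p, hp, -⟩ := hTtree.existsUnique_path u v
          set T2m := T2 \ SimpleGraph.fromEdgeSet {s(u, v)} with hT2m
          set S : Set V := {z | T2m.Reachable u z} with hS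
          have hsubm : ∀ e ∈ T2.edgeSet, e ≠ s(u, v) → e ∈ T2m.edgeSet := by
            intro e h1 h2
            rw [hT2m, edgeSet_sdiff, edgeSet_fromEdgeSet]
            exact ⟨h1, fun h => h2 h.1⟩
          have huS : u ∈ S := Reachable.refl _
          have hvS : v ∉ S := by
            have hbr : T2.IsBridge s(u, v) :=
              isAcyclic_iff_forall_adj_isBridge.1 htree2.IsAcyclic hT2uv
            exact isBridge_iff.1 hbr
          obtain ⟨c, d, hTcd, hcdP, hcS, hdS⟩ := exists_cross_s12 S p huS hvS
          have hfT : s(c, d) ∈ T.edgeSet := (SimpleGraph.mem_edgeSet _).2 hTcd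
          have hfne : s(c, d) ≠ s(u, v) := fun h => heT (h ▸ hfT)
          have hfT2 : s(c, d) ∉ T2.edgeSet := by
            intro h
            have : T2m.Adj c d := (SimpleGraph.mem_edgeSet _).1 (hsubm _ h hfne)
            exact hdS (hcS.trans this.reachable)
          -- w s(c,d) ≤ w s(u,v) by improvement-freeness of T
          have hwle : w s(c, d) ≤ w s(u, v) := by
            by_contra hlt
            push_neg at hlt
            exact hni _ ⟨u, v, s(c, d), hGuv, heT, hfT, ⟨p, hp, hcdP⟩, hlt, rfl⟩
          -- s(u,v) is on the T2-path from c to d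
          obtain ⟨q, hq, -⟩ := htree2.existsUnique_path c d
          have heQ : s(u, v) ∈ q.edges := by
            by_contra hnq
            exact hdS (hcS.trans (reach_avoid hsubm q hnq))
          obtain ⟨hedge2, htree3⟩ := exchange htree2 hTcd.ne hfT2 heT2 ⟨q, hq, heQ⟩
          set T3 := SimpleGraph.fromEdgeSet ((T2.edgeSet \ {s(u, v)}) ∪ {s(c, d)})
            with hT3
          have hle3 : T3 ≤ G := by
            rw [← SimpleGraph.edgeSet_subset_edgeSet, hedge2]
            rintro e (⟨h1, -⟩ | h2)
            · exact edgeSet_mono hle2 h1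
            · rw [Set.mem_singleton_iff] at h2
              exact h2 ▸ edgeSet_mono hTle hfT
          have hwe := weight_exchange w hfT2 heT2 hedge2
          have hdiff : T3.edgeSet \ T.edgeSet = (T2.edgeSet \ T.edgeSet) \ {s(u, v)} := by
            rw [hedge2]
            ext x
            simp only [Set.mem_diff, Set.mem_union, Set.mem_singleton_iff]
            constructor
            · rintro ⟨⟨h1, h2⟩ | h1, h3⟩
              · exact ⟨⟨h1, h3⟩, h2⟩
              · exact absurd (h1 ▸ hfT) h3
            · rintro ⟨⟨h1, h2⟩, h3⟩
              exact ⟨Or.inl ⟨h1, h3⟩, h2⟩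
          have hlt3 : (T3.edgeSet \ T.edgeSet).ncard < n := by
            rw [hdiff, ← hcard]
            exact Set.ncard_diff_singleton_lt_of_mem ⟨heT2, heT⟩ (Set.toFinite _)
          have := ih _ hlt3 T3 hle3 htree3 rfl
          linarith
end
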